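/- Let N be a monotone norm on ℝⁿ that is differentiable at every point of the nonnegative orthant except the origin. If N is p-supermodular for some p ≥ 1, then N is p′-supermodular for every p′ ≥ p. -/

import Mathlib

noncomputable section

/-- A monotone norm on ℝⁿ: subadditive, absolutely homogeneous, point-separating, and
monotone on the nonnegative orthant. -/
def IsMonotoneNorm {n : ℕ} (N : (Fin n → ℝ) → ℝ) : Prop :=
  (∀ x y, N (x + y) ≤ N x + N y) ∧
  (∀ (c : ℝ) (x), N (c • x) = |c| * N x) ∧
  (∀ x, N x = 0 → x = 0) ∧
  (∀ x y : Fin n → ℝ, 0 ≤ x → x ≤ y → N x ≤ N y)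

/-- `N` is `p`-supermodular: `N(u+v+w)^p − N(u+v)^p ≥ N(u+w)^p − N(u)^p` for all
nonnegative `u, v, w`. -/
def IsPSupermodular {n : ℕ} (N : (Fin n → ℝ) → ℝ) (p : ℝ) : Prop :=
  ∀ u v w : Fin n → ℝ, 0 ≤ u → 0 ≤ v → 0 ≤ w →
    N (u + w) ^ p - N u ^ p ≤ N (u + v + w) ^ p - N (u + v) ^ p

/-- Increments of `x ↦ x ^ q` (for `q ≥ 1`) over an interval of fixed length `d`
are larger when the interval starts further to the right. -/
lemma rpow_add_sub_le (q : ℝ) (hq : 1 ≤ q) {a b d : ℝ} (ha : 0 ≤ a) (hab : a ≤ b)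
    (hd : 0 ≤ d) : (a + d) ^ q - a ^ q ≤ (b + d) ^ q - b ^ q := by
  rcases eq_or_lt_of_le (show a ≤ b + d by linarith) with h | h
  · have hb : a = b := by linarith
    have hd0 : d = 0 := by linarith
    simp [hb, hd0]
  · set t : ℝ := d / (b + d - a) with ht
    have hden : 0 < b + d - a := by linarith
    have ht0 : 0 ≤ t := div_nonneg hd hden.le
    have ht1 : t ≤ 1 := (div_le_one hden).mpr (by linarith)
    have hconv := convexOn_rpow hq
    have h1 : (a + d) ^ q ≤ (1 - t) * a ^ q + t * (b + d) ^ q := by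
      have := hconv.2 (x := a) (y := b + d) (Set.mem_Ici.mpr ha)
        (Set.mem_Ici.mpr (by linarith)) (by linarith : (0:ℝ) ≤ 1 - t) ht0 (by ring)
      have heq : (1 - t) * a + t * (b + d) = a + d := by
        field_simp [ht]
        have e : t * (b + d - a) = d := by rw [ht]; exact div_mul_cancel₀ d hden.ne'
        linear_combination e
      simpa [smul_eq_mul, heq] using this
    have h2 : b ^ q ≤ t * a ^ q + (1 - t) * (b + d) ^ q := by
      have := hconv.2 (x := a) (y := b + d) (Set.mem_Ici.mpr ha)
        (Set.mem_Ici.mpr (by linarith)) ht0 (by linarith : (0:ℝ) ≤ 1 - t) (by ring)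
      have heq : t * a + (1 - t) * (b + d) = b := by
        field_simp [ht]
        have e : t * (b + d - a) = d := by rw [ht]; exact div_mul_cancel₀ d hden.ne'
        linear_combination -e
      simpa [smul_eq_mul, heq] using this
    linarith

/-- A differentiable `p`-supermodular monotone norm is also `p′`-supermodular for every
`p′ ≥ p`. -/
theorem pSupermodular_mono {n : ℕ} (N : (Fin n → ℝ) → ℝ) (hN : IsMonotoneNorm N)
    (hdiff : ∀ x : Fin n → ℝ, 0 ≤ x → x ≠ 0 → DifferentiableAt ℝ N x)
    (p : ℝ) (hp : 1 ≤ p) (hsup : IsPSupermodular N p)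
    (p' : ℝ) (hp' : p ≤ p') :
    IsPSupermodular N p' := by
  obtain ⟨hsub, hhom, hsep, hmono⟩ := hN
  have hp0 : 0 < p := lt_of_lt_of_le one_pos hp
  have hN0 : N 0 = 0 := by
    have := hhom 0 0
    simpa using this
  have hNnn : ∀ x : Fin n → ℝ, 0 ≤ x → 0 ≤ N x := fun x hx => by
    have := hmono 0 x le_rfl hx
    simpa [hN0] using this
  set q : ℝ := p' / p with hqdef
  have hq : 1 ≤ q := (one_le_div hp0).mpr hp'
  have hpow : ∀ x : Fin n → ℝ, 0 ≤ x → N x ^ p' = (N x ^ p) ^ q := by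
    intro x hx
    rw [← Real.rpow_mul (hNnn x hx)]
    rw [hqdef, mul_div_cancel₀ _ hp0.ne']
  intro u v w hu hv hw
  have huv : (0:Fin n → ℝ) ≤ u + v := by positivity
  have huw : (0:Fin n → ℝ) ≤ u + w := by positivity
  have huvw : (0:Fin n → ℝ) ≤ u + v + w := by positivity
  set A : ℝ := N u ^ p with hA
  set B : ℝ := N (u + v) ^ p with hB
  set C : ℝ := N (u + w) ^ p with hC
  set D : ℝ := N (u + v + w) ^ p with hD
  have hApos : 0 ≤ A := Real.rpow_nonneg (hNnn u hu) p
  have hBpos : 0 ≤ B := Real.rpow_nonneg (hNnn _ huv) p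
  have hAB : A ≤ B :=
    Real.rpow_le_rpow (hNnn u hu) (hmono u (u + v) hu (by intro i; simpa using hv i)) hp0.le
  have hBD : B ≤ D :=
    Real.rpow_le_rpow (hNnn _ huv) (hmono (u + v) (u + v + w) huv
      (by intro i; simpa using hw i)) hp0.le
  have hkey : C - A ≤ D - B := hsup u v w hu hv hw
  rw [hpow u hu, hpow _ huv, hpow _ huw, hpow _ huvw]
  show C ^ q - A ^ q ≤ D ^ q - B ^ q
  rcases le_or_gt C A with hCA | hAC
  · have h1 : C ^ q ≤ A ^ q :=
      Real.rpow_le_rpow (Real.rpow_nonneg (hNnn _ huw) p) hCA (le_trans zero_le_one hq)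
    have h2 : B ^ q ≤ D ^ q :=
      Real.rpow_le_rpow hBpos hBD (le_trans zero_le_one hq)
    linarith
  · have hd : 0 ≤ C - A := by linarith
    have h1 : (A + (C - A)) ^ q - A ^ q ≤ (B + (C - A)) ^ q - B ^ q :=
      rpow_add_sub_le q hq hApos hAB hd
    have h2 : (B + (C - A)) ^ q ≤ D ^ q :=
      Real.rpow_le_rpow (by linarith) (by linarith) (le_trans zero_le_one hq)
    have h3 : A + (C - A) = C := by ring
    rw [h3] at h1
    linarith
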